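/- Let A ∈ SGL_n(F₂), let x₁,…,x_r ∈ F₂ⁿ be linearly independent with xᵢᵀ A⁻¹ xᵢ = 1 for all i. If rank(x₁x₁ᵀ + ⋯ + x_r x_rᵀ + yyᵀ) < r for some y ∈ F₂ⁿ, then yᵀ A⁻¹ y = 1. -/

import Mathlib

open Matrix

private lemma quad_symm_char2 {r : ℕ} (G : Matrix (Fin r) (Fin r) (ZMod 2)) (hG : G.IsSymm)
    (c : Fin r → ZMod 2) : c ⬝ᵥ G *ᵥ c = ∑ i, c i * G i i * c i := by
  have expand : c ⬝ᵥ G *ᵥ c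
      = ∑ p ∈ Finset.univ ×ˢ (Finset.univ : Finset (Fin r)),
          c p.1 * G p.1 p.2 * c p.2 := by
    rw [Finset.sum_product]
    simp [dotProduct, mulVec, Finset.mul_sum, mul_assoc]
  have hoff : ∑ p ∈ (Finset.univ : Finset (Fin r)).offDiag,
      c p.1 * G p.1 p.2 * c p.2 = 0 := by
    apply Finset.sum_involution (fun p _ => (p.2, p.1))
    · intro p hp
      have hsym : G p.2 p.1 = G p.1 p.2 := by
        conv_lhs => rw [← hG]
        rfl
      simp only [hsym]
      have : c p.1 * G p.1 p.2 * c p.2 = c p.2 * G p.1 p.2 * c p.1 := by ring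
      rw [← this, ← two_mul]
      simp [show (2 : ZMod 2) = 0 by decide]
    · intro p hp _
      intro h
      exact (Finset.mem_offDiag.mp hp).2.2 (congrArg Prod.fst h).symm
    · intro p hp
      rcases Finset.mem_offDiag.mp hp with ⟨_, _, hne⟩
      exact Finset.mem_offDiag.mpr ⟨Finset.mem_univ _, Finset.mem_univ _, fun h => hne h.symm⟩
    · intro p hp
      rfl
  rw [expand, ← Finset.diag_union_offDiag (Finset.univ : Finset (Fin r)),
    Finset.sum_union (Finset.disjoint_diag_offDiag _), hoff, add_zero, Finset.sum_diag]

private lemma rank_conj {n r : ℕ} (X : Matrix (Fin r) (Fin n) (ZMod 2))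
    (hinj : Function.Injective Xᵀ.mulVec) (hsurj : Function.Surjective X.mulVec)
    (B : Matrix (Fin r) (Fin r) (ZMod 2)) (hB : IsUnit B) : (Xᵀ * B * X).rank = r := by
  have hcomp : (Xᵀ * B * X).mulVecLin = Xᵀ.mulVecLin ∘ₗ (B * X).mulVecLin := by
    rw [← mulVecLin_mul, Matrix.mul_assoc]
  have hsurj2 : Function.Surjective (B * X).mulVec := by
    intro w
    obtain ⟨w', hw'⟩ := (Matrix.mulVec_surjective_iff_isUnit.mpr hB) w
    obtain ⟨v, hv⟩ := hsurj w'
    exact ⟨v, by rw [← Matrix.mulVec_mulVec, hv, hw']⟩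
  rw [Matrix.rank, hcomp, LinearMap.range_comp,
    LinearMap.range_eq_top.mpr hsurj2, Submodule.map_top]
  rw [LinearMap.finrank_range_of_inj hinj]
  exact Module.finrank_fin_fun _

private lemma sum_vecMulVec {m n : ℕ} (z : Fin m → Fin n → ZMod 2) :
    ∑ i, vecMulVec (z i) (z i) = (Matrix.of z)ᵀ * (Matrix.of z) := by
  ext j k
  simp [Matrix.sum_apply, Matrix.mul_apply, vecMulVec_apply, mul_comm]

private lemma surj_of_li {n r : ℕ} (x : Fin r → Fin n → ZMod 2)
    (hli : LinearIndependent (ZMod 2) x) :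
    Function.Surjective (Matrix.of x).mulVec := by
  rw [← Matrix.coe_mulVecLin, ← LinearMap.range_eq_top]
  apply Submodule.eq_top_of_finrank_eq
  have h1 : (Matrix.of x).rank = r := by
    rw [Matrix.rank_eq_finrank_span_row]
    rw [show Set.range (Matrix.of x).row = Set.range x from rfl]
    rw [finrank_span_eq_card hli]
    simp
  rw [show Module.finrank (ZMod 2) (LinearMap.range (Matrix.of x).mulVecLin)
      = (Matrix.of x).rank from rfl, h1]
  exact (Module.finrank_fin_fun _).symm

private lemma inj_of_li {n r : ℕ} (x : Fin r → Fin n → ZMod 2)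
    (hli : LinearIndependent (ZMod 2) x) :
    Function.Injective (Matrix.of x)ᵀ.mulVec := by
  rw [Matrix.mulVec_injective_iff]
  simpa using hli

/-- If `A ∈ SGL_n(F₂)`, the `xᵢ` are linearly independent with `xᵢᵀ A⁻¹ xᵢ = 1` for all `i`,
and `rank(∑ xᵢxᵢᵀ + yyᵀ) < r`, then `yᵀ A⁻¹ y = 1`. -/
theorem diag_one_of_rank_lt {n r : ℕ} (A : Matrix (Fin n) (Fin n) (ZMod 2))
    (hAs : A.IsSymm) (hA : IsUnit A)
    (x : Fin r → Fin n → ZMod 2) (hli : LinearIndependent (ZMod 2) x)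
    (hx : ∀ i, x i ⬝ᵥ A⁻¹ *ᵥ x i = 1)
    (y : Fin n → ZMod 2)
    (hrank : ((∑ i, vecMulVec (x i) (x i)) + vecMulVec y y).rank < r) :
    y ⬝ᵥ A⁻¹ *ᵥ y = 1 := by
  set X : Matrix (Fin r) (Fin n) (ZMod 2) := Matrix.of x with hX
  -- Step 1: y ∈ span of the x i
  by_cases hy : y ∈ Submodule.span (ZMod 2) (Set.range x)
  swap
  · exfalso
    have hz : LinearIndependent (ZMod 2) (Fin.cons y x : Fin (r + 1) → Fin n → ZMod 2) :=
      linearIndependent_fin_cons.mpr ⟨hli, hy⟩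
    set Z : Matrix (Fin (r + 1)) (Fin n) (ZMod 2) := Matrix.of (Fin.cons y x) with hZ
    have hM : (∑ i, vecMulVec (x i) (x i)) + vecMulVec y y
        = Zᵀ * (1 : Matrix (Fin (r + 1)) (Fin (r + 1)) (ZMod 2)) * Z := by
      rw [Matrix.mul_one, hZ, ← sum_vecMulVec (Fin.cons y x), Fin.sum_univ_succ]
      simp [add_comm]
    rw [hM, rank_conj Z (inj_of_li _ hz) (surj_of_li _ hz) 1 isUnit_one] at hrank
    omega
  obtain ⟨c, hc⟩ := (Submodule.mem_span_range_iff_exists_fun (ZMod 2)).mp hy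
  have hy' : y = Xᵀ *ᵥ c := by
    ext j
    rw [← hc]
    simp [mulVec, dotProduct, Finset.sum_apply, mul_comm, hX]
  have hyv : y = c ᵥ* X := by rw [hy', Matrix.mulVec_transpose]
  -- Step 2: rewrite the matrix as Xᵀ * (1 + ccᵀ) * X
  have hM : (∑ i, vecMulVec (x i) (x i)) + vecMulVec y y
      = Xᵀ * (1 + vecMulVec c c) * X := by
    have h1 : (∑ i, vecMulVec (x i) (x i)) = Xᵀ * X := sum_vecMulVec x
    have h2 : vecMulVec y y = Xᵀ * vecMulVec c c * X := by
      nth_rewrite 1 [hy']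
      rw [hyv, vecMulVec_eq Unit, vecMulVec_eq Unit, Matrix.replicateCol_mulVec,
        Matrix.replicateRow_vecMul, Matrix.mul_assoc, Matrix.mul_assoc, Matrix.mul_assoc]
    rw [h1, h2, Matrix.mul_add, Matrix.add_mul, Matrix.mul_one]
  rw [hM] at hrank
  -- Step 3: 1 + ccᵀ is not invertible, so c ⬝ᵥ c = 1
  have hBnu : ¬ IsUnit (1 + vecMulVec c c) := by
    intro hB
    rw [rank_conj X (inj_of_li _ hli) (surj_of_li _ hli) _ hB] at hrank
    omega
  have hdet : (1 + vecMulVec c c).det = 0 := by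
    by_contra h
    exact hBnu ((Matrix.isUnit_iff_isUnit_det _).mpr (isUnit_iff_ne_zero.mpr h))
  have hcc : c ⬝ᵥ c = 1 := by
    rw [vecMulVec_eq Unit, Matrix.det_one_add_replicateCol_mul_replicateRow] at hdet
    revert hdet
    generalize c ⬝ᵥ c = s
    revert s; decide
  -- Step 4: compute y ⬝ᵥ A⁻¹ *ᵥ y via the Gram matrix
  set G : Matrix (Fin r) (Fin r) (ZMod 2) := X * A⁻¹ * Xᵀ with hG
  have hGs : G.IsSymm := by
    rw [Matrix.IsSymm, hG, Matrix.transpose_mul, Matrix.transpose_mul,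
      Matrix.transpose_transpose, Matrix.transpose_nonsing_inv, hAs.eq, Matrix.mul_assoc]
  have hGd : ∀ i, G i i = 1 := by
    intro i
    rw [← hx i]
    simp only [hG, Matrix.mul_apply, mulVec, dotProduct, Finset.sum_mul, Finset.mul_sum, hX,
      Matrix.transpose_apply, Matrix.of_apply]
    rw [Finset.sum_comm]
    refine Finset.sum_congr rfl fun a _ => Finset.sum_congr rfl fun b _ => by ring
  have key : c ⬝ᵥ G *ᵥ c = y ⬝ᵥ A⁻¹ *ᵥ y := by
    rw [hG, Matrix.mul_assoc, ← Matrix.mulVec_mulVec, ← Matrix.mulVec_mulVec,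
      ← hy', Matrix.dotProduct_mulVec, ← hyv]
  rw [← key, quad_symm_char2 G hGs c]
  calc ∑ i, c i * G i i * c i = ∑ i, c i * c i := by
        apply Finset.sum_congr rfl; intro i _; rw [hGd i]; ring
    _ = 1 := hcc
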